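/- Let q be an odd prime, m a divisor of q−1, and h = (q−1)/m. Then the congruence x^m ≡ 1 (mod q) has exactly m solutions modulo q; the congruence x^m ≡ −1 (mod q) has exactly m solutions modulo q if h is even, and no solutions if h is odd. Moreover, if m is even, then each of these two congruences has at most m/2 solutions that are prime numbers p with p < q−2. -/

import Mathlib

open Filter Topology

lemma aux3 (q m : ℕ) (hq : q.Prime) (hq3 : 3 ≤ q) (hm2 : 2 ∣ m) (a : ZMod q)
    (hS : Nat.card {x : ZMod q | x ^ m = a} ≤ m) :
    Nat.card {p : ℕ | p.Prime ∧ p < q - 2 ∧ (p : ZMod q) ^ m = a} ≤ m / 2 := by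
  haveI : Fact q.Prime := ⟨hq⟩
  set S : Set (ZMod q) := {x | x ^ m = a} with hSdef
  set P : Set ℕ := {p : ℕ | p.Prime ∧ p < q - 2 ∧ (p : ZMod q) ^ m = a} with hPdef
  set T : Set (ZMod q) := (fun p : ℕ => (p : ZMod q)) '' P with hTdef
  have hInj : Set.InjOn (fun p : ℕ => (p : ZMod q)) P := by
    intro p hp p' hp' hpp
    have h1 : p < q := lt_of_lt_of_le hp.2.1 (by omega)
    have h2 : p' < q := lt_of_lt_of_le hp'.2.1 (by omega)
    have := congrArg ZMod.val hpp
    rwa [ZMod.val_natCast_of_lt h1, ZMod.val_natCast_of_lt h2] at this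
  have hTS : T ⊆ S := by rintro _ ⟨p, hp, rfl⟩; exact hp.2.2
  have hnegS : ∀ x ∈ S, -x ∈ S := by
    intro x hx
    have hev : Even m := even_iff_two_dvd.mpr hm2
    simpa [hSdef, Set.mem_setOf_eq, hev.neg_pow] using hx
  have hdis : Disjoint T (Neg.neg '' T) := by
    rw [Set.disjoint_left]
    rintro x ⟨p, hp, rfl⟩ ⟨_, ⟨p', hp', rfl⟩, hneg⟩
    have hneg' : -(p' : ZMod q) = (p : ZMod q) := hneg
    have hz : ((p + p' : ℕ) : ZMod q) = 0 := by
      push_cast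
      rw [← hneg']; ring
    have hdvd : q ∣ p + p' := (ZMod.natCast_eq_zero_iff _ _).mp hz
    have hppos : 0 < p + p' := by have := hp.1.two_le; omega
    have hlt : p + p' < 2 * q := by
      have := hp.2.1; have := hp'.2.1; omega
    have heq : p + p' = q := by
      rcases hdvd with ⟨k, hk⟩
      rcases k with _ | _ | k
      · omega
      · omega
      · have : q * 2 ≤ q * (k + 1 + 1) := Nat.mul_le_mul_left q (by omega)
        omega
    have hqodd : Odd q := hq.odd_of_ne_two (by omega)
    have hp2 : p = 2 ∨ p' = 2 := by
      by_contra hcon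
      push_neg at hcon
      rcases hp.1.odd_of_ne_two hcon.1 with ⟨x, hx⟩
      rcases hp'.1.odd_of_ne_two hcon.2 with ⟨y, hy⟩
      rcases hqodd with ⟨z, hz⟩
      omega
    have := hp.2.1; have := hp'.2.1
    have := hp.1.two_le; have := hp'.1.two_le
    omega
  have hcount : T.ncard + T.ncard ≤ m := by
    have h1 : (T ∪ Neg.neg '' T).ncard = T.ncard + (Neg.neg '' T).ncard :=
      Set.ncard_union_eq hdis (Set.toFinite _) (Set.toFinite _)
    have h2 : (Neg.neg '' T).ncard = T.ncard := Set.ncard_image_of_injective _ neg_injective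
    have h3 : T ∪ Neg.neg '' T ⊆ S := by
      apply Set.union_subset hTS
      rintro _ ⟨x, hx, rfl⟩
      exact hnegS x (hTS hx)
    have h4 : (T ∪ Neg.neg '' T).ncard ≤ S.ncard := Set.ncard_le_ncard h3 (Set.toFinite S)
    have h5 : S.ncard = Nat.card S := (Nat.card_coe_set_eq S).symm
    omega
  have hfinal : Nat.card P = T.ncard := by
    rw [Nat.card_coe_set_eq, hTdef, Set.ncard_image_of_injOn hInj]
  omega

theorem statement12 (q m : ℕ) (hq : q.Prime) (hq_odd : q ≠ 2) (hm : m ∣ q - 1) :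
    Nat.card {x : ZMod q | x ^ m = 1} = m ∧
    Nat.card {x : ZMod q | x ^ m = -1} = (if 2 ∣ (q - 1) / m then m else 0) ∧
    (2 ∣ m →
      Nat.card {p : ℕ | p.Prime ∧ p < q - 2 ∧ (p : ZMod q) ^ m = 1} ≤ m / 2 ∧
      Nat.card {p : ℕ | p.Prime ∧ p < q - 2 ∧ (p : ZMod q) ^ m = -1} ≤ m / 2) := by
  haveI : Fact q.Prime := ⟨hq⟩
  have hq3 : 3 ≤ q := by have := hq.two_le; omega
  have hq1 : 2 ≤ q - 1 := by omega
  have hm0 : m ≠ 0 := by rintro rfl; rw [zero_dvd_iff] at hm; omega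
  have hmpos : 0 < m := Nat.pos_of_ne_zero hm0
  obtain ⟨h, hh⟩ := hm
  have hhpos : 0 < h := by
    rcases Nat.eq_zero_or_pos h with h0 | h0
    · rw [h0, mul_zero] at hh; omega
    · exact h0
  -- primitive root of unity of order q - 1
  obtain ⟨g, hg⟩ := IsCyclic.exists_generator (α := (ZMod q)ˣ)
  have horder : orderOf g = q - 1 := by
    rw [orderOf_eq_card_of_forall_mem_zpowers hg, Nat.card_eq_fintype_card, ZMod.card_units]
  have hζq : IsPrimitiveRoot ((g : ZMod q)) (q - 1) := by
    rw [IsPrimitiveRoot.coe_units_iff, ← horder]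
    exact IsPrimitiveRoot.orderOf g
  have hζm : IsPrimitiveRoot ((g : ZMod q) ^ h) m :=
    hζq.pow (by omega) (by rw [hh, mul_comm])
  -- Part 1
  have h1 : Nat.card {x : ZMod q | x ^ m = 1} = m := by
    have hset : {x : ZMod q | x ^ m = 1} = ↑(Polynomial.nthRootsFinset m (1 : ZMod q)) := by
      ext x
      simp [Polynomial.mem_nthRootsFinset hmpos]
    rw [Nat.card_coe_set_eq, hset, Set.ncard_coe_finset, hζm.card_nthRootsFinset]
  haveI : Fact (2 < q) := ⟨by omega⟩
  have hne11 : (-1 : ZMod q) ≠ 1 := ZMod.neg_one_ne_one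
  -- Part 2
  have h2 : Nat.card {x : ZMod q | x ^ m = -1} = (if 2 ∣ (q - 1) / m then m else 0) := by
    have hdivh : (q - 1) / m = h := by rw [hh]; exact Nat.mul_div_cancel_left h hmpos
    rw [hdivh]
    by_cases hev : 2 ∣ h
    · rw [if_pos hev]
      -- c := (g : ZMod q) ^ (h / 2 * m) satisfies c ^ ... ; use c = ζq ^ ((q-1)/2)
      set c : ZMod q := (g : ZMod q) ^ (h / 2) with hc
      have hcm : c ^ m = -1 := by
        have hpow : c ^ m = (g : ZMod q) ^ ((q - 1) / 2) := by
          rw [hc, ← pow_mul]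
          congr 1
          obtain ⟨t, rfl⟩ := hev
          rw [hh, Nat.mul_div_cancel_left t (by norm_num : 0 < 2)]
          have h2t : m * (2 * t) = 2 * (t * m) := by ring
          rw [h2t, Nat.mul_div_cancel_left _ (by norm_num : 0 < 2)]
        rw [hpow]
        set y : ZMod q := (g : ZMod q) ^ ((q - 1) / 2) with hy
        have hy2 : y * y = 1 := by
          rw [hy, ← pow_add]
          have : (q - 1) / 2 + (q - 1) / 2 = q - 1 := by
            have hqodd : Odd q := hq.odd_of_ne_two hq_odd
            rcases hqodd with ⟨z, hz⟩
            omega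
          rw [this, hζq.pow_eq_one]
        rcases mul_self_eq_one_iff.mp hy2 with hy1 | hy1
        · exfalso
          have := hζq.dvd_of_pow_eq_one _ hy1
          have hlt : (q - 1) / 2 < q - 1 := by omega
          have hpos : 0 < (q - 1) / 2 := by omega
          exact absurd (Nat.le_of_dvd hpos this) (by omega)
        · exact hy1
      have hc0 : c ≠ 0 := by
        intro hcon
        rw [hcon, zero_pow hm0] at hcm
        exact (neg_ne_zero.mpr (one_ne_zero : (1 : ZMod q) ≠ 0)) hcm.symm
      have himg : {x : ZMod q | x ^ m = -1} = (c * ·) '' {x : ZMod q | x ^ m = 1} := by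
        ext x
        constructor
        · intro hx
          refine ⟨c⁻¹ * x, ?_, by field_simp⟩
          have : (c⁻¹ * x) ^ m = (c ^ m)⁻¹ * x ^ m := by
            rw [mul_pow, inv_pow]
          simp only [Set.mem_setOf_eq] at hx ⊢
          rw [this, hcm, hx]
          norm_num
        · rintro ⟨y, hy, rfl⟩
          simp only [Set.mem_setOf_eq] at hy ⊢
          rw [mul_pow, hcm, hy, mul_one]
      rw [Nat.card_coe_set_eq, himg,
        Set.ncard_image_of_injective _ (mul_right_injective₀ hc0),
        ← Nat.card_coe_set_eq, h1]
    · rw [if_neg hev]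
      have hempty : {x : ZMod q | x ^ m = -1} = (∅ : Set (ZMod q)) := by
        rw [Set.eq_empty_iff_forall_notMem]
        intro x hx
        simp only [Set.mem_setOf_eq] at hx
        have hx0 : x ≠ 0 := by
          intro hcon
          rw [hcon, zero_pow hm0] at hx
          exact (neg_ne_zero.mpr (one_ne_zero : (1 : ZMod q) ≠ 0)) hx.symm
        have hxq : x ^ (q - 1) = 1 := ZMod.pow_card_sub_one_eq_one hx0
        have hx2m : x ^ (m * 2) = 1 := by rw [pow_mul, hx, neg_one_sq]
        have hd1 : orderOf x ∣ m * 2 := orderOf_dvd_of_pow_eq_one hx2m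
        have hd2 : orderOf x ∣ m * h := by rw [← hh]; exact orderOf_dvd_of_pow_eq_one hxq
        have hd3 : orderOf x ∣ m * Nat.gcd 2 h := by
          rw [← Nat.gcd_mul_left]
          exact Nat.dvd_gcd hd1 hd2
        have hgcd : Nat.gcd 2 h = 1 :=
          Nat.coprime_two_left.mpr (Nat.odd_iff.mpr (by omega))
        rw [hgcd, mul_one] at hd3
        have : x ^ m = 1 := orderOf_dvd_iff_pow_eq_one.mp hd3
        rw [hx] at this
        exact hne11 this
      rw [hempty]
      simp
  refine ⟨h1, h2, fun hm2 => ⟨?_, ?_⟩⟩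
  · exact aux3 q m hq hq3 hm2 1 (le_of_eq h1)
  · exact aux3 q m hq hq3 hm2 (-1) (by rw [h2]; split <;> omega)
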